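/- For all θ > 0, θ' > 0 with θ ≠ θ', and all h > 0, the integral over ℝ of (θ/(θ² + ω²)) · (θ'/(θ'² + ω²)) · sin²(π ω h) dω converges and equals (π/(2(θ + θ'))) · (1 − (θ·exp(−2π h θ') − θ'·exp(−2π h θ))/(θ − θ')). -/

import Mathlib

open Real MeasureTheory

open Set Filter Complex FourierTransform


lemma intOn_cexp {s : ℂ} (hs : 0 < s.re) :
    IntegrableOn (fun x : ℝ => Complex.exp (-(s * x))) (Ioi 0) := by
  have h1 : IntegrableOn (fun x : ℝ => Real.exp (-s.re * x)) (Ioi 0) :=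
    exp_neg_integrableOn_Ioi 0 hs
  refine (h1.integrable.mono' ?_ ?_)
  · exact (Complex.continuous_exp.comp (by continuity)).aestronglyMeasurable.restrict
  · filter_upwards with x
    rw [Complex.norm_exp]
    simp [neg_mul]

lemma integral_cexp_Ioi {s : ℂ} (hs : 0 < s.re) :
    ∫ x : ℝ in Ioi 0, Complex.exp (-(s * x)) = 1 / s := by
  have hs0 : s ≠ 0 := fun h => by simp [h] at hs
  have key := integral_Ioi_of_hasDerivAt_of_tendsto
    (f := fun x : ℝ => -Complex.exp (-(s * x)) / s)
    (f' := fun x : ℝ => Complex.exp (-(s * x))) (a := 0) (m := 0)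
    ?_ ?_ (intOn_cexp hs) ?_
  · rw [key]; simp [neg_div, one_div]
  · exact (Continuous.continuousWithinAt (by
      exact (Complex.continuous_exp.comp (by continuity)).neg.div_const s))
  · intro x _
    have : HasDerivAt (fun x : ℝ => -(s * (x : ℂ)) : ℝ → ℂ) (-s) x := by
      have h0 := ((Complex.ofRealCLM.hasDerivAt (x := x)).const_mul s).neg
      simp at h0
      exact h0
    have h2 := (this.cexp).neg.div_const s
    convert h2 using 1
    · rfl
    · rfl
    · field_simp
  · rw [tendsto_zero_iff_norm_tendsto_zero]
    have heq : (fun x : ℝ => ‖-Complex.exp (-(s * x)) / s‖) =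
        fun x : ℝ => Real.exp (-s.re * x) / ‖s‖ := by
      ext x
      rw [norm_div, norm_neg, Complex.norm_exp]
      simp [neg_mul]
    rw [heq]
    have h3 : Tendsto (fun x : ℝ => -s.re * x) atTop atBot :=
      tendsto_id.const_mul_atTop_of_neg (by linarith)
    simpa using (tendsto_exp_atBot.comp h3).div_const ‖s‖

lemma integrable_exp_neg_abs {a : ℝ} (ha : 0 < a) :
    Integrable (fun x : ℝ => Real.exp (-(a * |x|))) := by
  have hIoi : IntegrableOn (fun x : ℝ => Real.exp (-(a * |x|))) (Ioi 0) := by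
    refine (exp_neg_integrableOn_Ioi 0 ha).congr_fun (fun x hx => ?_) measurableSet_Ioi
    beta_reduce
    rw [abs_of_pos hx, neg_mul]
  have hIic : IntegrableOn (fun x : ℝ => Real.exp (-(a * |x|))) (Iic 0) := by
    rw [← Measure.map_neg_eq_self (volume : Measure ℝ)]
    have m : MeasurableEmbedding fun x : ℝ => -x := (Homeomorph.neg ℝ).measurableEmbedding
    rw [m.integrableOn_map_iff]
    simp_rw [Function.comp_def, abs_neg, neg_preimage, neg_Iic, neg_zero]
    exact Iff.mpr integrableOn_Ici_iff_integrableOn_Ioi hIoi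
  rw [← integrableOn_univ, ← Iic_union_Ioi (a := (0:ℝ))]
  exact hIic.union hIoi

lemma integrable_cexp_neg_abs {a : ℝ} (ha : 0 < a) :
    Integrable (fun x : ℝ => (Real.exp (-(a * |x|)) : ℂ)) :=
  (integrable_exp_neg_abs ha).ofReal

lemma fourier_exp_neg_abs {a : ℝ} (ha : 0 < a) (ξ : ℝ) :
    (𝓕 (fun x : ℝ => (Real.exp (-(a * |x|)) : ℂ))) ξ =
      ((2 * a / (a ^ 2 + (2 * π * ξ) ^ 2) : ℝ) : ℂ) := by
  rw [Real.fourier_real_eq_integral_exp_smul]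
  simp_rw [smul_eq_mul]
  have hsplit : ∫ v : ℝ, Complex.exp (↑(-2 * π * v * ξ) * Complex.I) *
      (Real.exp (-(a * |v|)) : ℂ) =
      (∫ v in Iic (0:ℝ), Complex.exp (↑(-2 * π * v * ξ) * Complex.I) *
        (Real.exp (-(a * |v|)) : ℂ)) +
      ∫ v in Ioi (0:ℝ), Complex.exp (↑(-2 * π * v * ξ) * Complex.I) *
        (Real.exp (-(a * |v|)) : ℂ) := by
    rw [← intervalIntegral.integral_Iic_add_Ioi] <;>
    · first
      | rfl
      | refine ((integrable_cexp_neg_abs ha).bdd_mul (c := 1) ?_ (Eventually.of_forall fun v => ?_)).integrableOn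
        · exact (Complex.continuous_exp.comp (by continuity)).aestronglyMeasurable
        · rw [Complex.norm_exp]
          simp
  rw [hsplit]
  set b : ℝ := 2 * π * ξ with hb
  have h1 : ((a:ℂ) + b * Complex.I).re = a := by simp
  have h2 : ((a:ℂ) - b * Complex.I).re = a := by simp
  have hIoi : (∫ v in Ioi (0:ℝ), Complex.exp (↑(-2 * π * v * ξ) * Complex.I) *
      (Real.exp (-(a * |v|)) : ℂ)) = 1 / ((a:ℂ) + b * Complex.I) := by
    rw [← integral_cexp_Ioi (s := (a:ℂ) + b * Complex.I) (by rw [h1]; exact ha)]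
    refine setIntegral_congr_fun measurableSet_Ioi (fun x hx => ?_)
    rw [abs_of_pos hx, Complex.ofReal_exp, ← Complex.exp_add]
    congr 1
    rw [hb]
    push_cast
    ring
  have hIic : (∫ v in Iic (0:ℝ), Complex.exp (↑(-2 * π * v * ξ) * Complex.I) *
      (Real.exp (-(a * |v|)) : ℂ)) = 1 / ((a:ℂ) - b * Complex.I) := by
    have key := integral_comp_neg_Iic (0:ℝ)
      (fun x : ℝ => Complex.exp (-(((a:ℂ) - b * Complex.I) * x)))
    rw [← integral_cexp_Ioi (s := (a:ℂ) - b * Complex.I) (by rw [h2]; exact ha),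
      show Ioi (0:ℝ) = Ioi (-0) by norm_num, ← key]
    refine setIntegral_congr_fun measurableSet_Iic (fun x hx => ?_)
    show _ = Complex.exp (-(((a:ℂ) - b * Complex.I) * (-x : ℝ)))
    rw [abs_of_nonpos hx, Complex.ofReal_exp, ← Complex.exp_add]
    congr 1
    rw [hb]
    push_cast
    ring
  rw [hIoi, hIic]
  have hd : ((a:ℂ)^2 + (b:ℂ)^2) ≠ 0 := by
    have heq : ((a:ℂ)^2 + (b:ℂ)^2) = ((a^2 + b^2 : ℝ) : ℂ) := by push_cast; ring
    rw [heq, Complex.ofReal_ne_zero]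
    positivity
  have h1' : ((a:ℂ) + b * Complex.I) ≠ 0 := fun hc => by simp [hc] at h1; exact ha.ne' h1.symm
  have h2' : ((a:ℂ) - b * Complex.I) ≠ 0 := fun hc => by simp [hc] at h2; exact ha.ne' h2.symm
  push_cast
  rw [div_add_div _ _ h2' h1']
  rw [div_eq_div_iff (by intro hc; exact hd (by rw [← hc]; ring_nf; rw [Complex.I_sq]; ring)) hd]
  ring_nf
  rw [Complex.I_sq]
  ring

lemma integrable_poisson {a : ℝ} (ha : 0 < a) :
    Integrable (fun ω : ℝ => a / (a ^ 2 + ω ^ 2)) := by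
  have h := (integrable_inv_one_add_sq.comp_div ha.ne').const_mul (1 / a)
  refine h.congr (Eventually.of_forall fun ω => ?_)
  have h1 : a ^ 2 + ω ^ 2 > 0 := by positivity
  field_simp

lemma integrable_fourier_exp_neg_abs {a : ℝ} (ha : 0 < a) :
    Integrable (𝓕 (fun x : ℝ => (Real.exp (-(a * |x|)) : ℂ))) := by
  rw [funext (fourier_exp_neg_abs ha)]
  apply Integrable.ofReal
  have h2π : (2 * π) ≠ 0 := by positivity
  have h := ((integrable_poisson ha).comp_mul_left' h2π).const_mul 2
  refine h.congr (Eventually.of_forall fun ξ => ?_)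
  show 2 * (a / (a ^ 2 + (2 * π * ξ) ^ 2)) = 2 * a / (a ^ 2 + (2 * π * ξ) ^ 2)
  rw [mul_div_assoc]

lemma integrable_cos_poisson {a : ℝ} (ha : 0 < a) (t : ℝ) :
    Integrable (fun ω : ℝ => Real.cos (t * ω) * (a / (a ^ 2 + ω ^ 2))) := by
  refine (integrable_poisson ha).bdd_mul (c := 1) ?_ (Eventually.of_forall fun ω => ?_)
  · exact (Real.continuous_cos.comp (continuous_const.mul continuous_id)).aestronglyMeasurable
  · simpa using Real.abs_cos_le_one _

lemma integral_cos_poisson {a : ℝ} (ha : 0 < a) (t : ℝ) :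
    ∫ ω : ℝ, Real.cos (t * ω) * (a / (a ^ 2 + ω ^ 2)) = π * Real.exp (-(a * |t|)) := by
  set f : ℝ → ℂ := fun x => (Real.exp (-(a * |x|)) : ℂ) with hf
  have hcont : Continuous f := by
    apply Complex.continuous_ofReal.comp
    exact Real.continuous_exp.comp (continuous_const.mul _root_.continuous_abs).neg
  have hinv := hcont.fourierInv_fourier_eq (integrable_cexp_neg_abs ha)
    (integrable_fourier_exp_neg_abs ha)
  have hval := congrArg (fun g : ℝ → ℂ => g t) hinv
  rw [Real.fourierInv_eq'] at hval
  rw [hf] at hval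
  simp_rw [fourier_exp_neg_abs ha, smul_eq_mul, RCLike.inner_apply, starRingEnd_apply,
    star_trivial] at hval
  simp_rw [mul_comm t] at hval
  have hgint : Integrable (fun v : ℝ => ((2 * a / (a ^ 2 + (2 * π * v) ^ 2) : ℝ) : ℂ)) := by
    apply Integrable.ofReal
    have h2π : (2 * π) ≠ 0 := by positivity
    have h := ((integrable_poisson ha).comp_mul_left' h2π).const_mul 2
    refine h.congr (Eventually.of_forall fun ξ => ?_)
    show 2 * (a / (a ^ 2 + (2 * π * ξ) ^ 2)) = 2 * a / (a ^ 2 + (2 * π * ξ) ^ 2)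
    rw [mul_div_assoc]
  have hint2 : Integrable (fun v : ℝ => Complex.exp (↑(2 * π * (v * t)) * Complex.I) *
      ((2 * a / (a ^ 2 + (2 * π * v) ^ 2) : ℝ) : ℂ)) := by
    refine hgint.bdd_mul (c := 1) ?_ (Eventually.of_forall fun v => ?_)
    · exact (Complex.continuous_exp.comp (by continuity)).aestronglyMeasurable
    · rw [Complex.norm_exp]
      simp
  have hre := congrArg Complex.re hval
  rw [show ((∫ (v : ℝ), Complex.exp (↑(2 * π * (v * t)) * Complex.I) *
      ((2 * a / (a ^ 2 + (2 * π * v) ^ 2) : ℝ) : ℂ)).re : ℝ) = RCLike.re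
      (∫ (v : ℝ), Complex.exp (↑(2 * π * (v * t)) * Complex.I) *
      ((2 * a / (a ^ 2 + (2 * π * v) ^ 2) : ℝ) : ℂ)) from rfl, ← integral_re hint2] at hre
  simp only [RCLike.re_eq_complex_re, Complex.mul_re, Complex.ofReal_re, Complex.ofReal_im,
    mul_zero, sub_zero, Complex.exp_ofReal_mul_I_re, hf] at hre
  -- hre : ∫ v, Real.cos (2*π*(v*t)) * (2*a/(a^2+(2*π*v)^2)) = rexp (-(a*|t|))
  have hcv := MeasureTheory.Measure.integral_comp_mul_left
    (fun ω : ℝ => Real.cos (t * ω) * (a / (a ^ 2 + ω ^ 2))) (2 * π)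
  have heq : (fun v : ℝ => Real.cos (2 * π * (v * t)) * (2 * a / (a ^ 2 + (2 * π * v) ^ 2))) =
      fun v : ℝ => 2 * (Real.cos (t * (2 * π * v)) * (a / (a ^ 2 + (2 * π * v) ^ 2))) := by
    funext v
    rw [show 2 * π * (v * t) = t * (2 * π * v) by ring]
    ring
  rw [heq, integral_const_mul, hcv] at hre
  rw [abs_of_pos (by positivity : (0:ℝ) < (2*π)⁻¹), smul_eq_mul] at hre
  have hπ : π ≠ 0 := Real.pi_ne_zero
  field_simp at hre
  simp_rw [mul_div_assoc] at hre
  linarith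

lemma poisson_sin_sq_eq {a h : ℝ} :
    (fun ω : ℝ => a / (a ^ 2 + ω ^ 2) * Real.sin (π * ω * h) ^ 2) =
      fun ω : ℝ => (1 / 2) * (Real.cos (0 * ω) * (a / (a ^ 2 + ω ^ 2))) -
        (1 / 2) * (Real.cos ((2 * π * h) * ω) * (a / (a ^ 2 + ω ^ 2))) := by
  funext ω
  rw [Real.sin_sq_eq_half_sub, zero_mul, Real.cos_zero,
    show 2 * π * h * ω = 2 * (π * ω * h) by ring]
  ring

lemma integrable_poisson_sin_sq {a : ℝ} (ha : 0 < a) (h : ℝ) :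
    Integrable (fun ω : ℝ => a / (a ^ 2 + ω ^ 2) * Real.sin (π * ω * h) ^ 2) := by
  rw [poisson_sin_sq_eq]
  exact ((integrable_cos_poisson ha 0).const_mul _).sub
    ((integrable_cos_poisson ha (2 * π * h)).const_mul _)

lemma integral_poisson_sin_sq {a h : ℝ} (ha : 0 < a) (hh : 0 < h) :
    ∫ ω : ℝ, a / (a ^ 2 + ω ^ 2) * Real.sin (π * ω * h) ^ 2 =
      π / 2 * (1 - Real.exp (-(2 * π * h * a))) := by
  rw [poisson_sin_sq_eq,
    integral_sub ((integrable_cos_poisson ha 0).const_mul _)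
      ((integrable_cos_poisson ha (2 * π * h)).const_mul _),
    integral_const_mul, integral_const_mul, integral_cos_poisson ha 0,
    integral_cos_poisson ha (2 * π * h), abs_zero,
    _root_.abs_of_pos (by positivity : (0:ℝ) < 2 * π * h)]
  rw [show a * (2 * π * h) = 2 * π * h * a by ring]
  simp
  ring

/-- For all `θ > 0`, `θ' > 0` with `θ ≠ θ'`, and all `h > 0`, the integral over `ℝ` of
`(θ/(θ² + ω²)) · (θ'/(θ'² + ω²)) · sin²(π ω h) dω` converges and equals
`(π/(2(θ + θ'))) · (1 − (θ·exp(−2πhθ') − θ'·exp(−2πhθ))/(θ − θ'))`. -/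
theorem integral_matern_half_product_sin_sq (θ θ' h : ℝ) (hθ : 0 < θ) (hθ' : 0 < θ')
    (hne : θ ≠ θ') (hh : 0 < h) :
    Integrable (fun ω : ℝ =>
      θ / (θ ^ 2 + ω ^ 2) * (θ' / (θ' ^ 2 + ω ^ 2)) * Real.sin (π * ω * h) ^ 2) ∧
    ∫ ω : ℝ, θ / (θ ^ 2 + ω ^ 2) * (θ' / (θ' ^ 2 + ω ^ 2)) * Real.sin (π * ω * h) ^ 2 =
      π / (2 * (θ + θ')) *
        (1 - (θ * Real.exp (-(2 * π * h * θ')) - θ' * Real.exp (-(2 * π * h * θ)))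
          / (θ - θ')) := by
  have hd : θ' ^ 2 - θ ^ 2 ≠ 0 := by
    have he : θ' ^ 2 - θ ^ 2 = (θ' - θ) * (θ' + θ) := by ring
    rw [he]
    exact mul_ne_zero (sub_ne_zero.mpr (Ne.symm hne)) (by positivity)
  have hkey : (fun ω : ℝ => θ / (θ ^ 2 + ω ^ 2) * (θ' / (θ' ^ 2 + ω ^ 2)) *
      Real.sin (π * ω * h) ^ 2) =
      fun ω : ℝ => (θ' / (θ' ^ 2 - θ ^ 2)) * (θ / (θ ^ 2 + ω ^ 2) * Real.sin (π * ω * h) ^ 2)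
        - (θ / (θ' ^ 2 - θ ^ 2)) * (θ' / (θ' ^ 2 + ω ^ 2) * Real.sin (π * ω * h) ^ 2) := by
    funext ω
    have h1 : θ ^ 2 + ω ^ 2 ≠ 0 := by positivity
    have h2 : θ' ^ 2 + ω ^ 2 ≠ 0 := by positivity
    field_simp
    ring
  constructor
  · rw [hkey]
    exact ((integrable_poisson_sin_sq hθ h).const_mul _).sub
      ((integrable_poisson_sin_sq hθ' h).const_mul _)
  · rw [hkey, integral_sub ((integrable_poisson_sin_sq hθ h).const_mul _)
      ((integrable_poisson_sin_sq hθ' h).const_mul _),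
      integral_const_mul, integral_const_mul,
      integral_poisson_sin_sq hθ hh, integral_poisson_sin_sq hθ' hh]
    have hsum : θ + θ' ≠ 0 := by positivity
    have hdiff : θ - θ' ≠ 0 := sub_ne_zero.mpr hne
    field_simp
    ring
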